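/- Let λ < 0 be real, let c be real with 0 < |c| < 1 and set s² = 1 − c². Then for every z ∈ ℂ with Re z ≤ λ/c² + (c²/(4s²|λ|))·(Im z)², there exist a real ρ ≥ 0 and a real η ∈ [−1, 1] such that (z − λ) + ρ + 2c·η·√(z − λ)·√ρ − s²·z = 0. -/
import Mathlib


/-- Principal branch of the complex square root:
`csqrt w = exp ((1/2) * Log w)` (via `cpow`), agreeing with the usual
square root on nonnegative reals. -/
noncomputable def csqrt (w : ℂ) : ℂ := w ^ ((1 : ℂ) / 2)

lemma csqrt_sq (w : ℂ) : (csqrt w) ^ 2 = w := by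
  have h := Complex.cpow_nat_inv_pow w (n := 2) (by norm_num)
  rw [csqrt, one_div]; exact_mod_cast h

lemma csqrt_ofReal {r : ℝ} (hr : 0 ≤ r) : csqrt (r : ℂ) = (Real.sqrt r : ℂ) := by
  rw [csqrt, show ((1:ℂ)/2) = ((1/2 : ℝ) : ℂ) by norm_num, ← Complex.ofReal_cpow hr,
    ← Real.sqrt_eq_rpow]

set_option maxHeartbeats 1000000 in
theorem exists_root_outside_parabolic_domain
    (lam c : ℝ) (z : ℂ)
    (hlam : lam < 0) (hc0 : 0 < |c|) (hc1 : |c| < 1)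
    (hz : z.re ≤ lam / c ^ 2 + (c ^ 2 / (4 * (1 - c ^ 2) * |lam|)) * z.im ^ 2) :
    ∃ ρ η : ℝ, 0 ≤ ρ ∧ η ∈ Set.Icc (-1 : ℝ) 1 ∧
      (z - (lam : ℂ)) + (ρ : ℂ)
        + 2 * (c : ℂ) * (η : ℂ) * csqrt (z - (lam : ℂ)) * csqrt ((ρ : ℝ) : ℂ)
        - (1 - (c : ℂ) ^ 2) * z = 0 := by
  have hc2 : 0 < c ^ 2 := by
    have : c ≠ 0 := by simpa using hc0.ne'
    positivity
  have hc2lt : c ^ 2 < 1 := by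
    have := sq_abs c; nlinarith
  have hS : 0 < 1 - c ^ 2 := by linarith
  have hL : 0 < -lam := by linarith
  have habs : |lam| = -lam := abs_of_neg hlam
  have hW2 : (csqrt (z - (lam : ℂ))) ^ 2 = z - (lam : ℂ) := csqrt_sq _
  obtain ⟨a, b, hWab⟩ : ∃ a b : ℝ, csqrt (z - (lam : ℂ)) = (a : ℂ) + (b : ℂ) * Complex.I :=
    ⟨_, _, (Complex.re_add_im _).symm⟩
  rw [hWab] at hW2
  have hre : z.re = a ^ 2 - b ^ 2 + lam := by
    have h := congrArg Complex.re hW2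
    simp [pow_two, Complex.mul_re, Complex.add_re, Complex.add_im, Complex.mul_im] at h
    linarith [h]
  have him : z.im = 2 * a * b := by
    have h := congrArg Complex.im hW2
    simp [pow_two, Complex.mul_re, Complex.add_re, Complex.add_im, Complex.mul_im] at h
    linarith [h]
  -- clear denominators in hz
  have hM : 0 < c ^ 2 * ((1 - c ^ 2) * -lam) := by positivity
  have key : (a ^ 2 - b ^ 2 + lam) * (c ^ 2 * ((1 - c ^ 2) * -lam))
      ≤ (1 - c ^ 2) * -lam * lam + c ^ 4 * a ^ 2 * b ^ 2 := by
    have e1 : lam / c ^ 2 + (c ^ 2 / (4 * (1 - c ^ 2) * |lam|)) * z.im ^ 2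
        = ((1 - c ^ 2) * -lam * lam + c ^ 4 * a ^ 2 * b ^ 2)
          / (c ^ 2 * ((1 - c ^ 2) * -lam)) := by
      rw [habs, him]
      field_simp [hc2.ne', hS.ne', hlam.ne]
      ring
    rw [hre, e1, le_div_iff₀ hM] at hz
    exact hz
  -- the crucial bound : c² b² ≥ (1-c²)(-lam)
  have hYpos : 0 < (1 - c ^ 2) * -lam + c ^ 2 * a ^ 2 := by
    nlinarith [mul_pos hS hL, mul_nonneg hc2.le (sq_nonneg a)]
  have hfac : ((1 - c ^ 2) * -lam - c ^ 2 * b ^ 2)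
      * ((1 - c ^ 2) * -lam + c ^ 2 * a ^ 2) ≤ 0 := by nlinarith [key]
  have hb2 : (1 - c ^ 2) * -lam ≤ c ^ 2 * b ^ 2 := by
    by_contra hcon
    push_neg at hcon
    have := mul_pos (by linarith : (0:ℝ) < (1 - c ^ 2) * -lam - c ^ 2 * b ^ 2) hYpos
    linarith
  obtain ⟨ρ, hρdef⟩ : ∃ ρ : ℝ, ρ = c ^ 2 * (a ^ 2 + b ^ 2) + (1 - c ^ 2) * lam := ⟨_, rfl⟩
  have hρa : c ^ 2 * a ^ 2 ≤ ρ := by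
    rw [hρdef]; nlinarith [hb2]
  have hρ0 : 0 ≤ ρ := le_trans (by positivity) hρa
  have hTc : csqrt ((ρ : ℝ) : ℂ) = ((Real.sqrt ρ : ℝ) : ℂ) := csqrt_ofReal hρ0
  have hzW : z = ((a : ℂ) + (b : ℂ) * Complex.I) ^ 2 + (lam : ℂ) := by
    linear_combination -hW2
  have hρc : ((ρ : ℝ) : ℂ) = (c : ℂ) ^ 2 * ((a:ℂ) ^ 2 + (b:ℂ) ^ 2)
      + (1 - (c:ℂ) ^ 2) * (lam : ℂ) := by
    rw [hρdef]; push_cast; ring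
  have hI := Complex.I_sq
  by_cases hρz : ρ = 0
  · have ha2 : a ^ 2 ≤ 0 := by nlinarith [hρa, hρz]
    have ha0 : a = 0 := by nlinarith [sq_nonneg a]
    have ha0c : (a : ℂ) = 0 := by exact_mod_cast ha0
    refine ⟨ρ, 0, hρ0, by constructor <;> norm_num, ?_⟩
    rw [hWab, hTc, hzW]
    push_cast
    linear_combination hρc + (c:ℂ)^2*(b:ℂ)^2*hI
      + 2*(c:ℂ)^2*((a:ℂ)+(b:ℂ)*Complex.I)*ha0c
  · obtain ⟨t, htdef⟩ : ∃ t : ℝ, t = Real.sqrt ρ := ⟨_, rfl⟩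
    have htpos : 0 < t := htdef ▸ Real.sqrt_pos.mpr (lt_of_le_of_ne hρ0 (Ne.symm hρz))
    have ht2 : t ^ 2 = ρ := htdef ▸ Real.sq_sqrt hρ0
    refine ⟨ρ, -(c * a) / t, hρ0, ?_, ?_⟩
    · rw [Set.mem_Icc, ← abs_le, abs_div, abs_of_pos htpos, div_le_one htpos, abs_neg,
        ← Real.sqrt_sq_eq_abs]
      rw [htdef]
      exact Real.sqrt_le_sqrt (by nlinarith [hρa])
    · rw [hWab, hTc, hzW, ← htdef]
      have htne : ((t : ℝ) : ℂ) ≠ 0 := by exact_mod_cast htpos.ne'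
      have hη : ((-(c * a) / t : ℝ) : ℂ) * ((t : ℝ) : ℂ) = -((c : ℂ) * (a : ℂ)) := by
        push_cast
        field_simp
      linear_combination hρc + 2*(c:ℂ)*((a:ℂ)+(b:ℂ)*Complex.I)*hη
        + (c:ℂ)^2*(b:ℂ)^2*hI
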